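/- Let C be a skew monoidal category with warping data (T, K, v, k, v₀) in which v, k, v₀, α, λ, ρ are all invertible. Then axioms 3, 4, and 5 for a warping (λ ∘ (v₀⊗1) ∘ v = Tλ ∘ T(v₀⊗1); α ∘ (v⊗1) ∘ k = 1⊗k; λ ∘ (v₀⊗1) ∘ k = 1) follow from axioms 1 (the pentagon axiom T(v) compatibility) and 2 ((1⊗v₀) ∘ v ∘ Tk = ρ). -/

import Mathlib

open CategoryTheory

universe w v u v' u'

/-- The data of a skew monoidal structure on a category: tensor product (on objects
and morphisms), unit object, and (not necessarily invertible) associator, left unitor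
and right unitor. -/
structure SkewMonoidalData (C : Type u) [Category.{v} C] where
  t : C → C → C
  tH : ∀ {X X' Y Y' : C}, (X ⟶ X') → (Y ⟶ Y') → (t X Y ⟶ t X' Y')
  I : C
  a : ∀ X Y Z : C, t (t X Y) Z ⟶ t X (t Y Z)
  l : ∀ X : C, t I X ⟶ X
  r : ∀ X : C, X ⟶ t X I

namespace SkewMonoidalData

variable {C : Type u} [Category.{v} C]

/-- The tensor product is functorial in each variable (a bifunctor). -/
class Functorial (S : SkewMonoidalData C) : Prop where
  tH_id : ∀ X Y : C, S.tH (𝟙 X) (𝟙 Y) = 𝟙 (S.t X Y)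
  tH_comp : ∀ {X X' X'' Y Y' Y'' : C} (f : X ⟶ X') (f' : X' ⟶ X'') (g : Y ⟶ Y')
    (g' : Y' ⟶ Y''), S.tH (f ≫ f') (g ≫ g') = S.tH f g ≫ S.tH f' g'

/-- The naturality conditions and five coherence axioms of a skew monoidal category. -/
structure IsSkewMonoidal (S : SkewMonoidalData C) : Prop where
  a_nat : ∀ {X X' Y Y' Z Z' : C} (f : X ⟶ X') (g : Y ⟶ Y') (h : Z ⟶ Z'),
    S.tH (S.tH f g) h ≫ S.a X' Y' Z' = S.a X Y Z ≫ S.tH f (S.tH g h)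
  l_nat : ∀ {X Y : C} (f : X ⟶ Y), S.tH (𝟙 S.I) f ≫ S.l Y = S.l X ≫ f
  r_nat : ∀ {X Y : C} (f : X ⟶ Y), f ≫ S.r Y = S.r X ≫ S.tH f (𝟙 S.I)
  pentagon : ∀ W X Y Z : C,
    S.tH (S.a W X Y) (𝟙 Z) ≫ S.a W (S.t X Y) Z ≫ S.tH (𝟙 W) (S.a X Y Z)
      = S.a (S.t W X) Y Z ≫ S.a W X (S.t Y Z)
  ax2 : ∀ X Y : C, S.tH (S.r X) (𝟙 Y) ≫ S.a X S.I Y ≫ S.tH (𝟙 X) (S.l Y) = 𝟙 (S.t X Y)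
  ax3 : ∀ X Y : C, S.a S.I X Y ≫ S.l (S.t X Y) = S.tH (S.l X) (𝟙 Y)
  ax4 : ∀ X Y : C, S.r (S.t X Y) ≫ S.a X Y S.I = S.tH (𝟙 X) (S.r Y)
  ax5 : S.r S.I ≫ S.l S.I = 𝟙 S.I

end SkewMonoidalData

/-- The data of a skew warping on a skew monoidal category (the one-object case of a
skew warping on a skew bicategory): a functor `T`, an object `K`, and natural families
`v : T(Tg ⊗ f) ⟶ Tg ⊗ Tf`, `k : f ⟶ Tf ⊗ K`, `v₀ : TK ⟶ I`. -/
structure SkewWarpingData {C : Type u} [Category.{v} C] (S : SkewMonoidalData C) where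
  T : C ⥤ C
  K : C
  v : ∀ g f : C, T.obj (S.t (T.obj g) f) ⟶ S.t (T.obj g) (T.obj f)
  k : ∀ f : C, f ⟶ S.t (T.obj f) K
  v0 : T.obj K ⟶ S.I
  v_nat : ∀ {g g' f f' : C} (φ : g ⟶ g') (ψ : f ⟶ f'),
    T.map (S.tH (T.map φ) ψ) ≫ v g' f' = v g f ≫ S.tH (T.map φ) (T.map ψ)
  k_nat : ∀ {f f' : C} (ψ : f ⟶ f'), ψ ≫ k f' = k f ≫ S.tH (T.map ψ) (𝟙 K)

namespace SkewWarpingData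

variable {C : Type u} [Category.{v} C] {S : SkewMonoidalData C}

/-- Warping axiom 1 (the pentagon-type axiom). -/
def wax1 (W : SkewWarpingData S) : Prop :=
  ∀ h g f : C,
    W.v (S.t (W.T.obj h) g) f ≫ S.tH (W.v h g) (𝟙 (W.T.obj f))
        ≫ S.a (W.T.obj h) (W.T.obj g) (W.T.obj f)
      = W.T.map (S.tH (W.v h g) (𝟙 f)) ≫ W.T.map (S.a (W.T.obj h) (W.T.obj g) f)
        ≫ W.v h (S.t (W.T.obj g) f) ≫ S.tH (𝟙 (W.T.obj h)) (W.v g f)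

/-- Warping axiom 2: `(1 ⊗ v₀) ∘ v ∘ T k = ρ`. -/
def wax2 (W : SkewWarpingData S) : Prop :=
  ∀ f : C, W.T.map (W.k f) ≫ W.v f W.K ≫ S.tH (𝟙 (W.T.obj f)) W.v0 = S.r (W.T.obj f)

/-- Warping axiom 3: `λ ∘ (v₀ ⊗ 1) ∘ v = T λ ∘ T (v₀ ⊗ 1)`. -/
def wax3 (W : SkewWarpingData S) : Prop :=
  ∀ f : C,
    W.v W.K f ≫ S.tH W.v0 (𝟙 (W.T.obj f)) ≫ S.l (W.T.obj f)
      = W.T.map (S.tH W.v0 (𝟙 f)) ≫ W.T.map (S.l f)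

/-- Warping axiom 4: `α ∘ (v ⊗ 1) ∘ k = 1 ⊗ k`. -/
def wax4 (W : SkewWarpingData S) : Prop :=
  ∀ g f : C,
    W.k (S.t (W.T.obj g) f) ≫ S.tH (W.v g f) (𝟙 W.K)
        ≫ S.a (W.T.obj g) (W.T.obj f) W.K
      = S.tH (𝟙 (W.T.obj g)) (W.k f)

/-- Warping axiom 5: `λ ∘ (v₀ ⊗ 1) ∘ k = 1`. -/
def wax5 (W : SkewWarpingData S) : Prop :=
  W.k W.K ≫ S.tH W.v0 (𝟙 W.K) ≫ S.l W.K = 𝟙 W.K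

/-- A skew warping: warping data satisfying the five axioms. -/
structure IsSkewWarping (W : SkewWarpingData S) : Prop where
  ax1 : W.wax1
  ax2 : W.wax2
  ax3 : W.wax3
  ax4 : W.wax4
  ax5 : W.wax5

end SkewWarpingData

section AuxiliaryForProof

open SkewMonoidalData

namespace SkewMonoidalData

variable {C : Type u} [Category.{v} C] (S : SkewMonoidalData C) [S.Functorial]

lemma tH_isIso {X X' Y Y' : C} (f : X ⟶ X') (g : Y ⟶ Y') [IsIso f] [IsIso g] :
    IsIso (S.tH f g) :=
  ⟨S.tH (inv f) (inv g), by rw [← Functorial.tH_comp]; simp [Functorial.tH_id],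
    by rw [← Functorial.tH_comp]; simp [Functorial.tH_id]⟩

lemma inv_tH {X X' Y Y' : C} (f : X ⟶ X') (g : Y ⟶ Y') [IsIso f] [IsIso g]
    [IsIso (S.tH f g)] : inv (S.tH f g) = S.tH (inv f) (inv g) := by
  apply IsIso.inv_eq_of_hom_inv_id
  rw [← Functorial.tH_comp]; simp [Functorial.tH_id]

lemma tH_split_right {X X' X'' : C} (f : X ⟶ X') (f' : X' ⟶ X'') (Y : C) :
    S.tH (f ≫ f') (𝟙 Y) = S.tH f (𝟙 Y) ≫ S.tH f' (𝟙 Y) := by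
  rw [← Functorial.tH_comp, Category.comp_id]

lemma tH_split_left (X : C) {Y Y' Y'' : C} (g : Y ⟶ Y') (g' : Y' ⟶ Y'') :
    S.tH (𝟙 X) (g ≫ g') = S.tH (𝟙 X) g ≫ S.tH (𝟙 X) g' := by
  rw [← Functorial.tH_comp, Category.comp_id]

lemma tH_merge {X X' X'' Y Y' : C} (f : X ⟶ X') (g : X' ⟶ X'') (h : Y ⟶ Y') :
    S.tH f (𝟙 Y) ≫ S.tH g h = S.tH (f ≫ g) h := by
  rw [← Functorial.tH_comp, Category.id_comp]

lemma tH_split_right_assoc {X X' X'' : C} (f : X ⟶ X') (f' : X' ⟶ X'') {Y V : C}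
    (x : S.t X'' Y ⟶ V) :
    S.tH (f ≫ f') (𝟙 Y) ≫ x = S.tH f (𝟙 Y) ≫ S.tH f' (𝟙 Y) ≫ x := by
  rw [S.tH_split_right, Category.assoc]

lemma tH_exch {X X' Y Y' : C} (f : X ⟶ X') (g : Y ⟶ Y') :
    S.tH f (𝟙 Y) ≫ S.tH (𝟙 X') g = S.tH f g := by
  rw [← Functorial.tH_comp, Category.id_comp, Category.comp_id]

/-- Kelly's classical argument: when the associator and unitors are invertible, the
axioms `ax3`, `ax4`, `ax5` follow from naturality, the pentagon and `ax2`. -/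
theorem kelly
    (Ha : ∀ {X X' Y Y' Z Z' : C} (f : X ⟶ X') (g : Y ⟶ Y') (h : Z ⟶ Z'),
      S.tH (S.tH f g) h ≫ S.a X' Y' Z' = S.a X Y Z ≫ S.tH f (S.tH g h))
    (Hl : ∀ {X Y : C} (f : X ⟶ Y), S.tH (𝟙 S.I) f ≫ S.l Y = S.l X ≫ f)
    (Hr : ∀ {X Y : C} (f : X ⟶ Y), f ≫ S.r Y = S.r X ≫ S.tH f (𝟙 S.I))
    (Hp : ∀ W X Y Z : C,
      S.tH (S.a W X Y) (𝟙 Z) ≫ S.a W (S.t X Y) Z ≫ S.tH (𝟙 W) (S.a X Y Z)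
        = S.a (S.t W X) Y Z ≫ S.a W X (S.t Y Z))
    (H2 : ∀ X Y : C, S.tH (S.r X) (𝟙 Y) ≫ S.a X S.I Y ≫ S.tH (𝟙 X) (S.l Y) = 𝟙 (S.t X Y))
    (ia : ∀ X Y Z : C, IsIso (S.a X Y Z)) (il : ∀ X : C, IsIso (S.l X))
    (ir : ∀ X : C, IsIso (S.r X)) :
    (∀ X Y : C, S.a S.I X Y ≫ S.l (S.t X Y) = S.tH (S.l X) (𝟙 Y)) ∧
    (∀ X Y : C, S.r (S.t X Y) ≫ S.a X Y S.I = S.tH (𝟙 X) (S.r Y)) ∧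
    S.r S.I ≫ S.l S.I = 𝟙 S.I := by
  letI M : MonoidalCategory C :=
    { tensorObj := S.t
      whiskerLeft := fun X _ _ f => S.tH (𝟙 X) f
      whiskerRight := fun f Y => S.tH f (𝟙 Y)
      tensorHom := fun f g => S.tH f g
      tensorUnit := S.I
      associator := fun X Y Z => @asIso _ _ _ _ _ (ia X Y Z)
      leftUnitor := fun X => @asIso _ _ _ _ _ (il X)
      rightUnitor := fun X => (@asIso _ _ _ _ _ (ir X)).symm
      tensorHom_def := by
        intro X₁ Y₁ X₂ Y₂ f g
        show S.tH f g = S.tH f (𝟙 X₂) ≫ S.tH (𝟙 Y₁) g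
        rw [← Functorial.tH_comp, Category.id_comp, Category.comp_id]
      id_tensorHom_id := fun X Y => Functorial.tH_id X Y
      tensorHom_comp_tensorHom := by
        intro X₁ Y₁ Z₁ X₂ Y₂ Z₂ f₁ f₂ g₁ g₂
        exact (Functorial.tH_comp f₁ g₁ f₂ g₂).symm
      whiskerLeft_id := fun X Y => Functorial.tH_id X Y
      id_whiskerRight := fun X Y => Functorial.tH_id X Y
      associator_naturality := by intro _ _ _ _ _ _ f₁ f₂ f₃; exact Ha f₁ f₂ f₃
      leftUnitor_naturality := by intro _ _ f; exact Hl f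
      rightUnitor_naturality := by
        intro X Y f
        haveI := ir X; haveI := ir Y
        show S.tH f (𝟙 S.I) ≫ inv (S.r Y) = inv (S.r X) ≫ f
        rw [IsIso.comp_inv_eq, Category.assoc, Hr f, IsIso.inv_hom_id_assoc]
      pentagon := Hp
      triangle := by
        intro X Y
        haveI := ir X
        haveI := S.tH_isIso (S.r X) (𝟙 Y)
        have h := H2 X Y
        rw [← IsIso.eq_inv_comp, Category.comp_id, S.inv_tH (S.r X) (𝟙 Y)] at h
        show S.a X S.I Y ≫ S.tH (𝟙 X) (S.l Y) = S.tH (inv (S.r X)) (𝟙 Y)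
        simpa using h }
  refine ⟨?_, ?_, ?_⟩
  · intro X Y
    haveI := ia S.I X Y
    have h : S.l (S.t X Y) = inv (S.a S.I X Y) ≫ S.tH (S.l X) (𝟙 Y) :=
      MonoidalCategory.leftUnitor_tensor_hom X Y
    rw [h, IsIso.hom_inv_id_assoc]
  · intro X Y
    haveI := ia X Y S.I
    have h : S.r (S.t X Y) = S.tH (𝟙 X) (S.r Y) ≫ inv (S.a X Y S.I) :=
      MonoidalCategory.rightUnitor_tensor_inv X Y
    rw [h, Category.assoc, IsIso.inv_hom_id, Category.comp_id]
  · haveI := ir S.I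
    have h : S.l S.I = inv (S.r S.I) := MonoidalCategory.unitors_equal (C := C)
    rw [h, IsIso.hom_inv_id]

end SkewMonoidalData

namespace SkewWarpingData

variable {C : Type u} [Category.{v} C] {S : SkewMonoidalData C}

/-- The skew monoidal data obtained by warping `S` along the warping data `W`. -/
def warped (W : SkewWarpingData S) : SkewMonoidalData C where
  t X Y := S.t (W.T.obj X) Y
  tH f g := S.tH (W.T.map f) g
  I := W.K
  a X Y Z := S.tH (W.v X Y) (𝟙 Z) ≫ S.a (W.T.obj X) (W.T.obj Y) Z
  l X := S.tH W.v0 (𝟙 X) ≫ S.l X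
  r := W.k

instance warped_functorial (W : SkewWarpingData S) [S.Functorial] : W.warped.Functorial where
  tH_id X Y := by
    show S.tH (W.T.map (𝟙 X)) (𝟙 Y) = _
    rw [W.T.map_id]
    exact SkewMonoidalData.Functorial.tH_id _ _
  tH_comp f f' g g' := by
    show S.tH (W.T.map (f ≫ f')) (g ≫ g') = _
    rw [W.T.map_comp]
    exact SkewMonoidalData.Functorial.tH_comp _ _ _ _

end SkewWarpingData

end AuxiliaryForProof

/-- for warping data on a skew monoidal category in which `v`, `k`, `v₀`,
`α`, `λ`, `ρ` are all invertible, warping axioms 3, 4 and 5 follow from axioms 1 and 2. -/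
theorem warping_redundant_axioms {C : Type u} [Category.{v} C]
    (S : SkewMonoidalData C) [S.Functorial] (hS : S.IsSkewMonoidal)
    (ia : ∀ X Y Z : C, IsIso (S.a X Y Z)) (il : ∀ X : C, IsIso (S.l X))
    (ir : ∀ X : C, IsIso (S.r X))
    (W : SkewWarpingData S)
    (iv : ∀ g f : C, IsIso (W.v g f)) (ik : ∀ f : C, IsIso (W.k f))
    (iv0 : IsIso W.v0)
    (h1 : W.wax1) (h2 : W.wax2) :
    W.wax3 ∧ W.wax4 ∧ W.wax5 := by
  obtain ⟨Ha, Hl, Hr, Hp, H2, H3, H4, H5⟩ := hS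
  have tid := SkewMonoidalData.Functorial.tH_id (S := S)
  -- naturality of the warped associator
  have Ha' : ∀ {X X' Y Y' Z Z' : C} (f : X ⟶ X') (g : Y ⟶ Y') (h : Z ⟶ Z'),
      W.warped.tH (W.warped.tH f g) h ≫ W.warped.a X' Y' Z'
        = W.warped.a X Y Z ≫ W.warped.tH f (W.warped.tH g h) := by
    intro X X' Y Y' Z Z' f g h
    show S.tH (W.T.map (S.tH (W.T.map f) g)) h
          ≫ S.tH (W.v X' Y') (𝟙 Z') ≫ S.a (W.T.obj X') (W.T.obj Y') Z'
        = (S.tH (W.v X Y) (𝟙 Z) ≫ S.a (W.T.obj X) (W.T.obj Y) Z)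
          ≫ S.tH (W.T.map f) (S.tH (W.T.map g) h)
    rw [← Category.assoc, ← SkewMonoidalData.Functorial.tH_comp, Category.comp_id,
      W.v_nat f g, ← S.tH_merge, Category.assoc, Ha, Category.assoc]
  -- naturality of the warped left unitor
  have Hl' : ∀ {X Y : C} (f : X ⟶ Y),
      W.warped.tH (𝟙 W.warped.I) f ≫ W.warped.l Y = W.warped.l X ≫ f := by
    intro X Y f
    show S.tH (W.T.map (𝟙 W.K)) f ≫ S.tH W.v0 (𝟙 Y) ≫ S.l Y
        = (S.tH W.v0 (𝟙 X) ≫ S.l X) ≫ f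
    rw [W.T.map_id, ← Category.assoc, ← SkewMonoidalData.Functorial.tH_comp,
      Category.id_comp, Category.comp_id, ← S.tH_exch, Category.assoc, Hl f,
      Category.assoc]
  -- naturality of the warped right unitor
  have Hr' : ∀ {X Y : C} (f : X ⟶ Y),
      f ≫ W.warped.r Y = W.warped.r X ≫ W.warped.tH f (𝟙 W.warped.I) :=
    fun f => W.k_nat f
  -- the warped pentagon, from warping axiom 1
  have Hp' : ∀ P Q R E : C,
      W.warped.tH (W.warped.a P Q R) (𝟙 E) ≫ W.warped.a P (W.warped.t Q R) E
          ≫ W.warped.tH (𝟙 P) (W.warped.a Q R E)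
        = W.warped.a (W.warped.t P Q) R E ≫ W.warped.a P Q (W.warped.t R E) := by
    intro P Q R E
    show S.tH (W.T.map (S.tH (W.v P Q) (𝟙 R) ≫ S.a (W.T.obj P) (W.T.obj Q) R)) (𝟙 E)
          ≫ (S.tH (W.v P (S.t (W.T.obj Q) R)) (𝟙 E)
              ≫ S.a (W.T.obj P) (W.T.obj (S.t (W.T.obj Q) R)) E)
          ≫ S.tH (W.T.map (𝟙 P)) (S.tH (W.v Q R) (𝟙 E) ≫ S.a (W.T.obj Q) (W.T.obj R) E)
        = (S.tH (W.v (S.t (W.T.obj P) Q) R) (𝟙 E)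
              ≫ S.a (W.T.obj (S.t (W.T.obj P) Q)) (W.T.obj R) E)
          ≫ S.tH (W.v P Q) (𝟙 (S.t (W.T.obj R) E))
          ≫ S.a (W.T.obj P) (W.T.obj Q) (S.t (W.T.obj R) E)
    have step1 : S.a (W.T.obj (S.t (W.T.obj P) Q)) (W.T.obj R) E
          ≫ S.tH (W.v P Q) (𝟙 (S.t (W.T.obj R) E))
        = S.tH (S.tH (W.v P Q) (𝟙 (W.T.obj R))) (𝟙 E)
          ≫ S.a (S.t (W.T.obj P) (W.T.obj Q)) (W.T.obj R) E := by
      have h := Ha (W.v P Q) (𝟙 (W.T.obj R)) (𝟙 E)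
      rw [tid] at h
      exact h.symm
    have step2 : S.a (W.T.obj P) (W.T.obj (S.t (W.T.obj Q) R)) E
          ≫ S.tH (𝟙 (W.T.obj P)) (S.tH (W.v Q R) (𝟙 E))
        = S.tH (S.tH (𝟙 (W.T.obj P)) (W.v Q R)) (𝟙 E)
          ≫ S.a (W.T.obj P) (S.t (W.T.obj Q) (W.T.obj R)) E := (Ha _ _ _).symm
    simp only [Category.assoc, CategoryTheory.Functor.map_id, CategoryTheory.Functor.map_comp]
    rw [S.tH_split_left (W.T.obj P) (S.tH (W.v Q R) (𝟙 E)) (S.a (W.T.obj Q) (W.T.obj R) E)]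
    rw [S.tH_split_right_assoc (W.T.map (S.tH (W.v P Q) (𝟙 R)))
      (W.T.map (S.a (W.T.obj P) (W.T.obj Q) R))]
    rw [reassoc_of% step2]
    rw [reassoc_of% step1]
    rw [← Hp (W.T.obj P) (W.T.obj Q) (W.T.obj R) E]
    rw [← S.tH_split_right_assoc (W.v P (S.t (W.T.obj Q) R))
      (S.tH (𝟙 (W.T.obj P)) (W.v Q R))]
    rw [← S.tH_split_right_assoc (W.T.map (S.a (W.T.obj P) (W.T.obj Q) R))
      (W.v P (S.t (W.T.obj Q) R) ≫ S.tH (𝟙 (W.T.obj P)) (W.v Q R))]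
    rw [← S.tH_split_right_assoc (W.T.map (S.tH (W.v P Q) (𝟙 R)))
      (W.T.map (S.a (W.T.obj P) (W.T.obj Q) R)
        ≫ W.v P (S.t (W.T.obj Q) R) ≫ S.tH (𝟙 (W.T.obj P)) (W.v Q R))]
    rw [← S.tH_split_right_assoc (S.tH (W.v P Q) (𝟙 (W.T.obj R)))
      (S.a (W.T.obj P) (W.T.obj Q) (W.T.obj R))]
    rw [← S.tH_split_right_assoc (W.v (S.t (W.T.obj P) Q) R)
      (S.tH (W.v P Q) (𝟙 (W.T.obj R)) ≫ S.a (W.T.obj P) (W.T.obj Q) (W.T.obj R))]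
    rw [h1 P Q R]
  -- the warped axiom 2, from warping axiom 2
  have H2' : ∀ X Y : C, W.warped.tH (W.warped.r X) (𝟙 Y) ≫ W.warped.a X W.warped.I Y
      ≫ W.warped.tH (𝟙 X) (W.warped.l Y) = 𝟙 (W.warped.t X Y) := by
    intro X Y
    show S.tH (W.T.map (W.k X)) (𝟙 Y)
          ≫ (S.tH (W.v X W.K) (𝟙 Y) ≫ S.a (W.T.obj X) (W.T.obj W.K) Y)
          ≫ S.tH (W.T.map (𝟙 X)) (S.tH W.v0 (𝟙 Y) ≫ S.l Y)
        = 𝟙 (S.t (W.T.obj X) Y)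
    have step : S.a (W.T.obj X) (W.T.obj W.K) Y ≫ S.tH (𝟙 (W.T.obj X)) (S.tH W.v0 (𝟙 Y))
        = S.tH (S.tH (𝟙 (W.T.obj X)) W.v0) (𝟙 Y) ≫ S.a (W.T.obj X) S.I Y :=
      (Ha (𝟙 (W.T.obj X)) W.v0 (𝟙 Y)).symm
    simp only [Category.assoc, CategoryTheory.Functor.map_id]
    rw [S.tH_split_left (W.T.obj X) (S.tH W.v0 (𝟙 Y)) (S.l Y)]
    rw [reassoc_of% step]
    rw [← S.tH_split_right_assoc (W.v X W.K) (S.tH (𝟙 (W.T.obj X)) W.v0)]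
    rw [← S.tH_split_right_assoc (W.T.map (W.k X))
      (W.v X W.K ≫ S.tH (𝟙 (W.T.obj X)) W.v0)]
    rw [h2 X]
    exact H2 (W.T.obj X) Y
  -- invertibility of the warped structure maps
  have ia' : ∀ X Y Z : C, IsIso (W.warped.a X Y Z) := by
    intro X Y Z
    haveI := iv X Y
    haveI := ia (W.T.obj X) (W.T.obj Y) Z
    haveI := S.tH_isIso (W.v X Y) (𝟙 Z)
    show IsIso (S.tH (W.v X Y) (𝟙 Z) ≫ S.a (W.T.obj X) (W.T.obj Y) Z)
    infer_instance
  have il' : ∀ X : C, IsIso (W.warped.l X) := by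
    intro X
    haveI := iv0
    haveI := il X
    haveI := S.tH_isIso W.v0 (𝟙 X)
    show IsIso (S.tH W.v0 (𝟙 X) ≫ S.l X)
    infer_instance
  have ir' : ∀ X : C, IsIso (W.warped.r X) := ik
  obtain ⟨K3, K4, K5⟩ := W.warped.kelly Ha' Hl' Hr' Hp' H2' ia' il' ir'
  -- a cancellation principle: tensoring with the unit on the right is faithful
  have cancelR : ∀ {X Y : C} (u w : X ⟶ Y), S.tH u (𝟙 S.I) = S.tH w (𝟙 S.I) → u = w := by
    intro X Y u w h
    haveI := ir Y
    have hu := Hr u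
    rw [h, ← Hr w] at hu
    exact (cancel_mono (S.r Y)).mp hu
  refine ⟨?_, ?_, ?_⟩
  · -- wax3
    intro f
    apply cancelR
    have h' : S.tH (W.v W.K f) (𝟙 S.I) ≫ S.a (W.T.obj W.K) (W.T.obj f) S.I
          ≫ S.tH W.v0 (𝟙 (S.t (W.T.obj f) S.I)) ≫ S.l (S.t (W.T.obj f) S.I)
        = S.tH (W.T.map (S.tH W.v0 (𝟙 f) ≫ S.l f)) (𝟙 S.I) := by
      have h : (S.tH (W.v W.K f) (𝟙 S.I) ≫ S.a (W.T.obj W.K) (W.T.obj f) S.I)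
            ≫ (S.tH W.v0 (𝟙 (S.t (W.T.obj f) S.I)) ≫ S.l (S.t (W.T.obj f) S.I))
          = S.tH (W.T.map (S.tH W.v0 (𝟙 f) ≫ S.l f)) (𝟙 S.I) := K3 f S.I
      simpa only [Category.assoc] using h
    rw [W.T.map_comp] at h'
    rw [S.tH_split_right (W.v W.K f)
      (S.tH W.v0 (𝟙 (W.T.obj f)) ≫ S.l (W.T.obj f)) S.I]
    rw [S.tH_split_right (S.tH W.v0 (𝟙 (W.T.obj f))) (S.l (W.T.obj f)) S.I]
    rw [← H3 (W.T.obj f) S.I]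
    rw [reassoc_of% (Ha W.v0 (𝟙 (W.T.obj f)) (𝟙 S.I))]
    rw [tid]
    exact h'
  · -- wax4
    intro g f
    have h := K4 g f
    have h' : W.k (S.t (W.T.obj g) f)
          ≫ (S.tH (W.v g f) (𝟙 W.K) ≫ S.a (W.T.obj g) (W.T.obj f) W.K)
        = S.tH (W.T.map (𝟙 g)) (W.k f) := h
    rw [W.T.map_id] at h'
    exact h'
  · -- wax5
    exact K5
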